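/- Let 0 → ℤ → Γ̃ → Γ → 0 be a central extension of groups where Γ̃ has the property that every homomorphism Γ̃ → (ℝ,+) is trivial (e.g. Γ̃ has property (T)), and where ℤ embeds as an infinite central subgroup of Γ̃. Let q : Γ → Γ̃ be a set-theoretic section of the quotient map p, and let c(g,h) = q(g)q(h)q(gh)⁻¹ ∈ ℤ be the associated 2-cocycle. Then c is not an ℝ-valued 2-coboundary: there is no function b : Γ → ℝ with c(g,h) = b(g) + b(h) − b(gh) for all g,h ∈ Γ. -/
import Mathlib


/-- Let `0 → ℤ → Γ̃ → Γ → 0` be a central extension where `ℤ` embeds as an infinite central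
subgroup of `Γ̃` via `ι`, and every homomorphism `Γ̃ → (ℝ,+)` is trivial (e.g. `Γ̃` has
property (T)). Let `q` be a set-theoretic section of the quotient `p` and
`c(g,h) = q(g)q(h)q(gh)⁻¹ ∈ ℤ` the associated 2-cocycle. Then `c` is not an ℝ-valued
2-coboundary: there is no `b : Γ → ℝ` with `c(g,h) = b(g) + b(h) − b(gh)`. -/
theorem stmt19 {Γ' Γ : Type*} [Group Γ'] [Group Γ]
    (p : Γ' →* Γ) (hp : Function.Surjective p)
    (ι : ℤ → Γ') (hιhom : ∀ m n : ℤ, ι (m + n) = ι m * ι n)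
    (hιinj : Function.Injective ι)
    (hcentral : ∀ (n : ℤ) (g : Γ'), ι n * g = g * ι n)
    (hker : ∀ g : Γ', p g = 1 ↔ ∃ n : ℤ, g = ι n)
    (hT : ∀ s : Γ' → ℝ, (∀ a b : Γ', s (a * b) = s a + s b) → ∀ a, s a = 0)
    (q : Γ → Γ') (hq : ∀ g, p (q g) = g)
    (c : Γ → Γ → ℤ) (hc : ∀ g h, ι (c g h) = q g * q h * (q (g * h))⁻¹) :
    ¬ ∃ b : Γ → ℝ, ∀ g h, (c g h : ℝ) = b g + b h - b (g * h) := by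
  rintro ⟨b, hb⟩
  -- basic facts about ι
  have hι0 : ι 0 = 1 := by
    have := hιhom 0 0
    simp at this
    exact this
  have hιinv : ∀ n : ℤ, ι (-n) = (ι n)⁻¹ := by
    intro n
    have h : ι (-n) * ι n = 1 := by rw [← hιhom]; simp [hι0]
    exact eq_inv_of_mul_eq_one_left h
  -- existence of r
  have hr : ∀ g : Γ', ∃ n : ℤ, q (p g) * g⁻¹ = ι n := by
    intro g
    have : p (q (p g) * g⁻¹) = 1 := by simp [hq]
    exact (hker _).mp this
  classical
  set r : Γ' → ℤ := fun g => (hr g).choose with hrdef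
  have hrspec : ∀ g : Γ', q (p g) = ι (r g) * g := by
    intro g
    have := (hr g).choose_spec
    have : q (p g) * g⁻¹ * g = ι (r g) * g := by rw [this]
    simpa using this
  -- key identity: r a + r b = c (p a) (p b) + r (a*b)
  have key : ∀ a b : Γ', r a + r b = c (p a) (p b) + r (a * b) := by
    intro a b'
    have h1 : q (p a) * q (p b') = ι (c (p a) (p b')) * q (p (a * b')) := by
      have := hc (p a) (p b')
      rw [map_mul]
      have h2 : ι (c (p a) (p b')) * q (p a * p b') =
          q (p a) * q (p b') * (q (p a * p b'))⁻¹ * q (p a * p b') := by rw [this]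
      simpa using h2.symm
    rw [hrspec a, hrspec b', hrspec (a * b')] at h1
    have h3 : ι (r a) * (a * ι (r b')) * b' = ι (c (p a) (p b')) * (ι (r (a * b')) * (a * b')) := by
      rw [← h1]; group
    rw [← hcentral (r b') a] at h3
    have h4 : ι (r a) * ι (r b') * (a * b') = ι (c (p a) (p b')) * ι (r (a * b')) * (a * b') := by
      calc ι (r a) * ι (r b') * (a * b') = ι (r a) * (ι (r b') * a) * b' := by group
        _ = ι (c (p a) (p b')) * (ι (r (a * b')) * (a * b')) := h3
        _ = ι (c (p a) (p b')) * ι (r (a * b')) * (a * b') := by group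
    have h5 : ι (r a) * ι (r b') = ι (c (p a) (p b')) * ι (r (a * b')) :=
      mul_right_cancel h4
    rw [← hιhom, ← hιhom] at h5
    exact hιinj h5
  -- define s
  set s : Γ' → ℝ := fun g => (r g : ℝ) - b (p g) with hsdef
  have hshom : ∀ a b : Γ', s (a * b) = s a + s b := by
    intro a b'
    have hk := key a b'
    have hbk := hb (p a) (p b')
    simp only [hsdef, map_mul]
    have : (r (a * b') : ℝ) = (r a : ℝ) + r b' - c (p a) (p b') := by
      have : ((r a + r b' : ℤ) : ℝ) = ((c (p a) (p b') + r (a * b') : ℤ) : ℝ) := by rw [hk]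
      push_cast at this
      linarith
    rw [this, hbk]
    ring
  have hs0 := hT s hshom
  -- compute s (ι 1)
  have hpι : ∀ n : ℤ, p (ι n) = 1 := fun n => (hker (ι n)).mpr ⟨n, rfl⟩
  have hq1 : q 1 = ι (c 1 1) := by
    have := hc 1 1
    simp at this
    exact this.symm
  have hb1 : b 1 = (c 1 1 : ℝ) := by
    have := hb 1 1
    simp at this
    linarith
  have hrι : ∀ n : ℤ, r (ι n) = c 1 1 - n := by
    intro n
    apply hιinj
    have := hrspec (ι n)
    rw [hpι n, hq1] at this
    have h2 : ι (c 1 1) * (ι n)⁻¹ = ι (r (ι n)) := by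
      rw [this]; group
    rw [← hιinv, ← hιhom] at h2
    rw [← h2]
    ring_nf
  have := hs0 (ι 1)
  simp only [hsdef] at this
  rw [hrι 1, hpι 1, hb1] at this
  push_cast at this
  linarith
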